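/- A tree T is graceful if and only if its spike tree spik(T) is strongly graceful with respect to the perfect matching consisting of the added end edges; that is, T admits a graceful labelling if and only if spik(T) admits a strong graceful labelling with respect to the matching {vv' : v a vertex of T}. -/

import Mathlib

open SimpleGraph

/-- A graceful labelling of a graph `G` with `m` edges: an injective function
`f` from the vertices into `{0, 1, …, m}` such that the induced edge labels
`|f u − f v|` are pairwise distinct over the edges. -/
def IsGracefulLabeling {V : Type} (G : SimpleGraph V) (f : V → ℕ) : Prop :=
  Function.Injective f ∧ (∀ v, f v ≤ G.edgeSet.ncard) ∧
  ∀ u v x y : V, G.Adj u v → G.Adj x y →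
    Nat.dist (f u) (f v) = Nat.dist (f x) (f y) → s(u, v) = s(x, y)

/-- A strong graceful labelling of `G` on `n` vertices with respect to a matching `M`:
a graceful labelling such that `f x + f y = n - 1` for every edge `xy ∈ M`. -/
def IsStrongGracefulLabeling {V : Type} [Fintype V] (G : SimpleGraph V)
    (M : G.Subgraph) (f : V → ℕ) : Prop :=
  IsGracefulLabeling G f ∧ ∀ x y : V, M.Adj x y → f x + f y = Fintype.card V - 1


/-- The spike tree of `G`: add a new pendant vertex `Sum.inr v` adjacent to each
original vertex `Sum.inl v` of `G`. -/
def spike {V : Type} (G : SimpleGraph V) : SimpleGraph (V ⊕ V) where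
  Adj a b :=
    match a, b with
    | Sum.inl u, Sum.inl w => G.Adj u w
    | Sum.inl u, Sum.inr w => u = w
    | Sum.inr u, Sum.inl w => w = u
    | Sum.inr _, Sum.inr _ => False
  symm := by
    constructor
    rintro (u | u) (w | w) h
    · exact G.adj_symm h
    · exact h
    · exact h
    · exact h
  loopless := by
    constructor
    rintro (u | u) h
    · exact G.irrefl h
    · exact h

/-- The set of added end edges `(inl v)(inr v)` of `spike G`, as a subgraph. -/
def spikeMatching {V : Type} (G : SimpleGraph V) : (spike G).Subgraph where
  verts := Set.univ
  Adj a b := (∃ x, a = Sum.inl x ∧ b = Sum.inr x) ∨ (∃ x, a = Sum.inr x ∧ b = Sum.inl x)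
  adj_sub := by
    rintro a b (⟨x, rfl, rfl⟩ | ⟨x, rfl, rfl⟩) <;> exact rfl
  edge_vert := by
    intro a b _
    trivial
  symm := by
    constructor
    rintro a b (⟨x, rfl, rfl⟩ | ⟨x, rfl, rfl⟩)
    · exact Or.inr ⟨x, rfl, rfl⟩
    · exact Or.inl ⟨x, rfl, rfl⟩

section Aux

variable {V : Type}

lemma spike_adj_ll {G : SimpleGraph V} {u w : V} :
    (spike G).Adj (Sum.inl u) (Sum.inl w) ↔ G.Adj u w := Iff.rfl

lemma spike_adj_lr {G : SimpleGraph V} {u w : V} :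
    (spike G).Adj (Sum.inl u) (Sum.inr w) ↔ u = w := Iff.rfl

lemma spike_adj_rl {G : SimpleGraph V} {u w : V} :
    (spike G).Adj (Sum.inr u) (Sum.inl w) ↔ w = u := Iff.rfl

lemma spike_adj_rr {G : SimpleGraph V} {u w : V} :
    ¬ (spike G).Adj (Sum.inr u) (Sum.inr w) := fun h => h

lemma nat_dist_def (a b : ℕ) : Nat.dist a b = a - b + (b - a) := rfl

lemma spike_edgeSet_ncard [Fintype V] (G : SimpleGraph V) :
    (spike G).edgeSet.ncard = G.edgeSet.ncard + Fintype.card V := by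
  classical
  have hset : (spike G).edgeSet =
      (Sym2.map Sum.inl '' G.edgeSet) ∪
        ((fun v : V => s(Sum.inl v, Sum.inr v)) '' Set.univ) := by
    ext e
    induction e using Sym2.ind with
    | _ a b =>
      constructor
      · intro h
        rw [SimpleGraph.mem_edgeSet] at h
        rcases a with u | u <;> rcases b with w | w
        · exact Or.inl ⟨s(u, w), h, by rw [Sym2.map_pair_eq]⟩
        · subst h
          exact Or.inr ⟨u, Set.mem_univ u, rfl⟩
        · subst h
          exact Or.inr ⟨w, Set.mem_univ w, Sym2.eq_swap⟩
        · exact h.elim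
      · rintro (⟨e', he', heq⟩ | ⟨v, -, heq⟩)
        · induction e' using Sym2.ind with
          | _ x y =>
            rw [Sym2.map_pair_eq] at heq
            rw [← heq, SimpleGraph.mem_edgeSet]
            exact he'
        · rw [← heq, SimpleGraph.mem_edgeSet]
          exact spike_adj_lr.mpr rfl
  have hdisj : Disjoint (Sym2.map Sum.inl '' G.edgeSet)
      ((fun v : V => s(Sum.inl v, Sum.inr v)) '' Set.univ) := by
    rw [Set.disjoint_left]
    rintro x ⟨e', he', rfl⟩ ⟨v, -, hv⟩
    induction e' using Sym2.ind with
    | _ a b =>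
      rw [Sym2.map_pair_eq] at hv
      rcases Sym2.eq_iff.mp hv with ⟨-, h2⟩ | ⟨-, h2⟩ <;> exact absurd h2 (by simp)
  rw [hset, Set.ncard_union_eq hdisj (Set.toFinite _) (Set.toFinite _),
    Set.ncard_image_of_injective _ (Sym2.map.injective Sum.inl_injective),
    Set.ncard_image_of_injective _ (fun a b h => by
      rcases Sym2.eq_iff.mp h with ⟨h1, -⟩ | ⟨h1, -⟩
      · exact Sum.inl_injective h1
      · exact absurd h1 (by simp)),
    Set.ncard_univ, Nat.card_eq_fintype_card]

lemma tree_edge_ncard [Fintype V] {G : SimpleGraph V} (hT : G.IsTree) :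
    G.edgeSet.ncard = Fintype.card V - 1 := by
  classical
  rw [Set.ncard_eq_toFinset_card' G.edgeSet]
  have := hT.card_edgeFinset
  rw [SimpleGraph.edgeFinset] at this
  omega

end Aux

/-- A tree `T` is graceful if and only if its spike tree `spik T` is strongly graceful
with respect to the perfect matching consisting of the added end edges. -/
theorem graceful_iff_spike_stronglyGraceful {V : Type} [Fintype V] (G : SimpleGraph V)
    (hT : G.IsTree) :
    (∃ f : V → ℕ, IsGracefulLabeling G f) ↔
    (∃ f : V ⊕ V → ℕ, IsStrongGracefulLabeling (spike G) (spikeMatching G) f) := by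
  classical
  set n := Fintype.card V with hn
  have hne : Nonempty V := hT.isConnected.nonempty
  have hn1 : 1 ≤ n := Fintype.card_pos
  have hGcard : G.edgeSet.ncard = n - 1 := tree_edge_ncard hT
  have hScard : (spike G).edgeSet.ncard = 2 * n - 1 := by
    rw [spike_edgeSet_ncard, hGcard]; omega
  have hcardSum : Fintype.card (V ⊕ V) = 2 * n := by
    rw [Fintype.card_sum]; omega
  constructor
  · rintro ⟨g, ginj, gbd, gdist⟩
    have gbd' : ∀ v, g v ≤ n - 1 := by intro v; rw [← hGcard]; exact gbd v
    refine ⟨Sum.elim (fun v => 2 * g v) (fun v => 2 * n - 1 - 2 * g v), ⟨?_, ?_, ?_⟩, ?_⟩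
    · rintro (a | a) (b | b) h <;> simp only [Sum.elim_inl, Sum.elim_inr] at h
      · exact congrArg Sum.inl (ginj (by omega))
      · have := gbd' a; have := gbd' b; omega
      · have := gbd' a; have := gbd' b; omega
      · have : g a = g b := by have := gbd' a; have := gbd' b; omega
        exact congrArg Sum.inr (ginj this)
    · rintro (v | v) <;> simp only [Sum.elim_inl, Sum.elim_inr] <;>
        rw [hScard] <;> have := gbd' v <;> omega
    · rintro (a | a) (b | b) (c | c) (d | d) hab hcd heq <;>
        simp only [Sum.elim_inl, Sum.elim_inr] at heq
      · -- LL LL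
        have h1 : Nat.dist (g a) (g b) = Nat.dist (g c) (g d) := by
          simp only [nat_dist_def] at heq ⊢; omega
        have h2 := gdist a b c d hab hcd h1
        rcases Sym2.eq_iff.mp h2 with ⟨rfl, rfl⟩ | ⟨rfl, rfl⟩
        · rfl
        · exact Sym2.eq_swap
      · -- LL LR
        rw [spike_adj_lr] at hcd; subst hcd
        exfalso
        have hgab : g a ≠ g b := fun h => (G.ne_of_adj hab) (ginj h)
        have := gbd' c
        simp only [nat_dist_def] at heq; omega
      · rw [spike_adj_rl] at hcd; subst hcd
        exfalso
        have := gbd' d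
        simp only [nat_dist_def] at heq; omega
      · exact hcd.elim
      · rw [spike_adj_lr] at hab; subst hab
        exfalso
        have := gbd' a
        simp only [nat_dist_def] at heq; omega
      · rw [spike_adj_lr] at hab; subst hab
        rw [spike_adj_lr] at hcd; subst hcd
        have hac : g a = g c := by
          have := gbd' a; have := gbd' c
          simp only [nat_dist_def] at heq; omega
        rw [ginj hac]
      · rw [spike_adj_lr] at hab; subst hab
        rw [spike_adj_rl] at hcd
        rw [hcd] at heq ⊢
        have hac : g a = g c := by
          have := gbd' a; have := gbd' c
          simp only [nat_dist_def] at heq; omega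
        rw [ginj hac]; exact Sym2.eq_swap
      · exact hcd.elim
      · rw [spike_adj_rl] at hab; subst hab
        exfalso
        have := gbd' b
        simp only [nat_dist_def] at heq; omega
      · rw [spike_adj_rl] at hab; subst hab
        rw [spike_adj_lr] at hcd; subst hcd
        have hac : g b = g c := by
          have := gbd' b; have := gbd' c
          simp only [nat_dist_def] at heq; omega
        rw [ginj hac]; exact Sym2.eq_swap
      · rw [spike_adj_rl] at hab; subst hab
        rw [spike_adj_rl] at hcd; subst hcd
        have hac : g b = g d := by
          have := gbd' b; have := gbd' d
          simp only [nat_dist_def] at heq; omega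
        rw [ginj hac]
      · exact hcd.elim
      · exact hab.elim
      · exact hab.elim
      · exact hab.elim
      · exact hab.elim
    · rintro x y (⟨v, rfl, rfl⟩ | ⟨v, rfl, rfl⟩) <;>
        simp only [Sum.elim_inl, Sum.elim_inr] <;> rw [hcardSum] <;> have := gbd' v <;> omega
  · rintro ⟨f, ⟨finj, fbd, fdist⟩, fmatch⟩
    have fbd' : ∀ a, f a ≤ 2 * n - 1 := by intro a; rw [← hScard]; exact fbd a
    have hsum : ∀ w : V, f (Sum.inl w) + f (Sum.inr w) = 2 * n - 1 := by
      intro w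
      have := fmatch (Sum.inl w) (Sum.inr w) (Or.inl ⟨w, rfl, rfl⟩)
      rwa [hcardSum] at this
    -- every tree edge has even label
    have hadj : ∀ u v : V, G.Adj u v → f (Sum.inl u) % 2 = f (Sum.inl v) % 2 := by
      intro u v huv
      by_contra hpar
      set d := Nat.dist (f (Sum.inl u)) (f (Sum.inl v)) with hd
      have hdodd : d % 2 = 1 := by rw [hd, nat_dist_def]; omega
      set h : Option V → ℕ :=
        fun o => o.elim d (fun w => Nat.dist (f (Sum.inl w)) (f (Sum.inr w))) with hh
      have hodd : ∀ o, h o % 2 = 1 := by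
        rintro (_ | w)
        · exact hdodd
        · have := hsum w
          simp only [hh, Option.elim, nat_dist_def]
          omega
      have hbd : ∀ o, h o ≤ 2 * n - 1 := by
        rintro (_ | w)
        · have := fbd' (Sum.inl u); have := fbd' (Sum.inl v)
          simp only [hh, Option.elim, hd, nat_dist_def]
          omega
        · have := fbd' (Sum.inl w); have := fbd' (Sum.inr w)
          simp only [hh, Option.elim, nat_dist_def]
          omega
      have hinj : Function.Injective h := by
        have key : ∀ w : V, d ≠ Nat.dist (f (Sum.inl w)) (f (Sum.inr w)) := by
          intro w hcon
          have := fdist (Sum.inl u) (Sum.inl v) (Sum.inl w) (Sum.inr w) huv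
            (spike_adj_lr.mpr rfl) hcon
          rcases Sym2.eq_iff.mp this with ⟨-, h2⟩ | ⟨h1, -⟩
          · exact absurd h2 (by simp)
          · exact absurd h1 (by simp)
        rintro (_ | w) (_ | w') hww
        · rfl
        · exact absurd hww (key w')
        · exact absurd hww.symm (key w)
        · simp only [hh, Option.elim] at hww
          have := fdist (Sum.inl w) (Sum.inr w) (Sum.inl w') (Sum.inr w')
            (spike_adj_lr.mpr rfl) (spike_adj_lr.mpr rfl) hww
          rcases Sym2.eq_iff.mp this with ⟨h1, -⟩ | ⟨h1, -⟩
          · rw [Sum.inl_injective h1]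
          · exact absurd h1 (by simp)
      have hk : Function.Injective (fun o => (⟨(h o - 1) / 2, by
          have := hbd o; have := hodd o; omega⟩ : Fin n)) := by
        intro o o' hoo
        apply hinj
        have h1 := hodd o; have h2 := hodd o'
        have h3 : (h o - 1) / 2 = (h o' - 1) / 2 := congrArg Fin.val hoo
        omega
      have := Fintype.card_le_of_injective _ hk
      rw [Fintype.card_option, Fintype.card_fin] at this
      omega
    -- all original labels have the same parity
    have hpar : ∀ u v : V, f (Sum.inl u) % 2 = f (Sum.inl v) % 2 := by
      intro u v
      obtain ⟨w⟩ := hT.isConnected.preconnected u v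
      induction w with
      | nil => rfl
      | cons hadj' p ih => exact (hadj _ _ hadj').trans ih
    refine ⟨fun v => f (Sum.inl v) / 2, ?_, ?_, ?_⟩
    · intro a b hab
      have hab' : f (Sum.inl a) / 2 = f (Sum.inl b) / 2 := hab
      have := hpar a b
      have : f (Sum.inl a) = f (Sum.inl b) := by omega
      exact Sum.inl_injective (finj this)
    · intro v
      rw [hGcard]
      show f (Sum.inl v) / 2 ≤ n - 1
      have := fbd' (Sum.inl v)
      omega
    · intro u v x y huv hxy heq
      have heq' : Nat.dist (f (Sum.inl u) / 2) (f (Sum.inl v) / 2)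
          = Nat.dist (f (Sum.inl x) / 2) (f (Sum.inl y) / 2) := heq
      have h1 : Nat.dist (f (Sum.inl u)) (f (Sum.inl v))
          = Nat.dist (f (Sum.inl x)) (f (Sum.inl y)) := by
        have p1 := hpar u v; have p2 := hpar x y; have p3 := hpar u x
        simp only [nat_dist_def] at heq' ⊢
        omega
      have := fdist (Sum.inl u) (Sum.inl v) (Sum.inl x) (Sum.inl y) huv hxy h1
      rcases Sym2.eq_iff.mp this with ⟨h1', h2'⟩ | ⟨h1', h2'⟩
      · rw [Sum.inl_injective h1', Sum.inl_injective h2']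
      · rw [Sum.inl_injective h1', Sum.inl_injective h2']
        exact Sym2.eq_swap
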